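/- If m ∈ 𝐌_{T̄,k} and ∞ > ndrk(m) = β > α, then there is n ∈ 𝐌_{T̄,k} with m ⊑ n and ndrk(n) = α. -/

import Mathlib

open scoped Classical

/-- Finite binary sequences, i.e. elements of `2^{<ω}`. -/
abbrev Seq2 : Type := List (ZMod 2)

/-- Coordinatewise addition mod 2 of finite binary sequences (of the same length). -/
def seqAdd (x y : Seq2) : Seq2 := List.zipWith (· + ·) x y

/-- `T ⊆ 2^{<ω}` is a tree with no maximal nodes. -/
def IsTreeNoMax (T : Set Seq2) : Prop :=
  (∀ s ∈ T, ∀ t : Seq2, t <+: s → t ∈ T) ∧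
  (∀ s ∈ T, ∃ t ∈ T, s <+: t ∧ s ≠ t)

/-- An element of `𝐌_{T̄,k}` (`k = 2ι`): a tuple `(ℓ, u, h̄, ḡ)` as in Definition 3.3.
The functions `h_i`, `g_i` are recorded as total functions that take the default values
`0` resp. `[]` off the domain `u^⟨2⟩`. -/
structure MTK (T : ℕ → Set Seq2) (ι : ℕ) where
  len : ℕ
  u : Finset Seq2
  h : Fin ι → Seq2 → Seq2 → ℕ
  g : Fin ι → Seq2 → Seq2 → Seq2
  len_pos : 0 < len
  mem_len : ∀ η ∈ u, η.length = len
  two_le_card : 2 ≤ u.card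
  g_mem : ∀ (i : Fin ι), ∀ η ∈ u, ∀ ν ∈ u, η ≠ ν →
    g i η ν ∈ T (h i η ν) ∧ (g i η ν).length = len
  add_eq : ∀ (i : Fin ι), ∀ η ∈ u, ∀ ν ∈ u, η ≠ ν →
    seqAdd η (g i η ν) = seqAdd ν (g i ν η)
  no_rep : ∀ η ∈ u, ∀ ν ∈ u, η ≠ ν →
    Function.Injective (fun p : Fin ι × Bool => if p.2 then g p.1 η ν else g p.1 ν η)
  h_default : ∀ i η ν, ¬ (η ∈ u ∧ ν ∈ u ∧ η ≠ ν) → h i η ν = 0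
  g_default : ∀ i η ν, ¬ (η ∈ u ∧ ν ∈ u ∧ η ≠ ν) → g i η ν = []

namespace MTK

variable {T : ℕ → Set Seq2} {ι : ℕ}

/-- `m ⊑ n` : `n` extends `m`. -/
def Ext (m n : MTK T ι) : Prop :=
  m.len ≤ n.len ∧
  m.u = n.u.image (fun η => η.take m.len) ∧
  ∀ η ∈ n.u, ∀ ν ∈ n.u, η ≠ ν → η.take m.len ≠ ν.take m.len →
    ∀ i : Fin ι,
      m.h i (η.take m.len) (ν.take m.len) = n.h i η ν ∧
      m.g i (η.take m.len) (ν.take m.len) = (n.g i η ν).take m.len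

/-- `NdrkGe m α` says `ndrk(m) ≥ α`. -/
def NdrkGe (m : MTK T ι) (α : Ordinal) : Prop :=
  ∀ β : Ordinal, β < α → ∀ ν ∈ m.u, ∃ n : MTK T ι,
    m.len < n.len ∧ m.Ext n ∧ NdrkGe n β ∧
    2 ≤ (n.u.filter (fun η => ν <+: η)).card
termination_by α

end MTK

namespace MTK
variable {T : ℕ → Set Seq2} {ι : ℕ}

theorem ndrkGe_iff (m : MTK T ι) (α : Ordinal) :
    NdrkGe m α ↔ ∀ β : Ordinal, β < α → ∀ ν ∈ m.u, ∃ n : MTK T ι,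
    m.len < n.len ∧ m.Ext n ∧ NdrkGe n β ∧
    2 ≤ (n.u.filter (fun η => ν <+: η)).card := by
  rw [NdrkGe]

theorem ndrkGe_mono {m : MTK T ι} {α β : Ordinal} (h : NdrkGe m β) (hle : α ≤ β) :
    NdrkGe m α := by
  rw [ndrkGe_iff] at h ⊢
  exact fun γ hγ => h γ (hγ.trans_le hle)

theorem ext_trans {m n p : MTK T ι} (h1 : m.Ext n) (h2 : n.Ext p) : m.Ext p := by
  obtain ⟨hle1, hu1, hg1⟩ := h1
  obtain ⟨hle2, hu2, hg2⟩ := h2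
  refine ⟨hle1.trans hle2, ?_, ?_⟩
  · rw [hu1, hu2, Finset.image_image]
    apply Finset.image_congr
    intro η hη
    simp only [Function.comp_apply, List.take_take, min_eq_left hle1]
  · intro η hη ν hν hne hneT i
    have hη' : η.take n.len ∈ n.u := by rw [hu2]; exact Finset.mem_image_of_mem _ hη
    have hν' : ν.take n.len ∈ n.u := by rw [hu2]; exact Finset.mem_image_of_mem _ hν
    have e1 : (η.take n.len).take m.len = η.take m.len := by
      rw [List.take_take, min_eq_left hle1]
    have e2 : (ν.take n.len).take m.len = ν.take m.len := by
      rw [List.take_take, min_eq_left hle1]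
    have hneT' : η.take n.len ≠ ν.take n.len := by
      intro h; apply hneT; rw [← e1, ← e2, h]
    have hm := hg1 _ hη' _ hν' hneT' (by rw [e1, e2]; exact hneT) i
    have hn := hg2 η hη ν hν hne hneT' i
    rw [e1, e2] at hm
    exact ⟨hm.1.trans hn.1, by rw [hm.2, hn.2, List.take_take, min_eq_left hle1]⟩

theorem stmt_15' (T : ℕ → Set Seq2) (ι : ℕ)
    (m : MTK T ι) (α β : Ordinal)
    (hge : MTK.NdrkGe m β) (hlt : ¬ MTK.NdrkGe m (β + 1)) (hαβ : α < β) :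
    ∃ n : MTK T ι, m.Ext n ∧ MTK.NdrkGe n α ∧ ¬ MTK.NdrkGe n (α + 1) := by
  induction β using Ordinal.induction generalizing m α with
  | h β IH =>
  -- From hlt, extract a failing ν at level β
  rw [ndrkGe_iff] at hlt
  push_neg at hlt
  obtain ⟨γ, hγ, ν, hν, hfail⟩ := hlt
  have hγβ : γ = β := by
    rcases lt_or_eq_of_le (Order.lt_succ_iff.mp (by rwa [Ordinal.add_one_eq_succ] at hγ)) with h | h
    · exfalso
      obtain ⟨n, h1, h2, h3, h4⟩ := (ndrkGe_iff m β).mp hge γ h ν hν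
      exact absurd h4 (not_le.mpr (hfail n h1 h2 h3))
    · exact h
  rw [hγβ] at hfail
  -- Get a witness n for α at ν
  obtain ⟨n, hlen, hext, hnα, hcard⟩ := (ndrkGe_iff m β).mp hge α hαβ ν hν
  have hnβ : ¬ NdrkGe n β := fun h => absurd hcard (not_le.mpr (hfail n hlen hext h))
  -- Least ordinal δ₀ where n fails
  set S : Set Ordinal := {γ | ¬ NdrkGe n γ} with hS
  have hSne : S.Nonempty := ⟨β, hnβ⟩
  set δ₀ := Ordinal.lt_wf.min S hSne with hδ₀def
  have hδ₀mem : δ₀ ∈ S := Ordinal.lt_wf.min_mem S hSne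
  have hδ₀min : ∀ γ < δ₀, NdrkGe n γ := fun γ hγ =>
    not_not.mp (fun h => Ordinal.lt_wf.not_lt_min S h hγ)
  have hαδ₀ : α < δ₀ := by
    by_contra h
    exact hδ₀mem (ndrkGe_mono hnα (not_lt.mp h))
  have hδ₀β : δ₀ ≤ β := Ordinal.lt_wf.min_le hnβ
  -- δ₀ is a successor
  rcases Ordinal.zero_or_succ_or_isSuccLimit δ₀ with h0 | ⟨δ, hδ⟩ | hlim
  · rw [h0] at hαδ₀; exact absurd hαδ₀ (not_lt_zero (a := α))
  · -- δ₀ = δ + 1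
    have hδ := hδ.symm
    have hnδ : NdrkGe n δ := hδ₀min δ (by rw [hδ]; exact Order.lt_succ δ)
    have hnδ1 : ¬ NdrkGe n (δ + 1) := by rwa [Ordinal.add_one_eq_succ, ← hδ]
    have hαδ : α ≤ δ := by
      rw [hδ] at hαδ₀
      exact Order.lt_succ_iff.mp hαδ₀
    rcases eq_or_lt_of_le hαδ with rfl | hαδlt
    · exact ⟨n, hext, hnα, hnδ1⟩
    · have hδβ : δ < β := lt_of_lt_of_le (by rw [hδ]; exact Order.lt_succ δ) hδ₀β
      obtain ⟨p, hp1, hp2, hp3⟩ := IH δ hδβ n α hnδ hnδ1 hαδlt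
      exact ⟨p, ext_trans hext hp1, hp2, hp3⟩
  · -- limit: contradiction, n would satisfy NdrkGe n δ₀
    exfalso
    apply hδ₀mem
    rw [ndrkGe_iff]
    intro γ hγ ν' hν'
    have := hδ₀min (Order.succ γ) (hlim.succ_lt hγ)
    rw [ndrkGe_iff] at this
    exact this γ (Order.lt_succ γ) ν' hν'

end MTK


/-- If ∞ > ndrk(m) = β > α then some n ⊒ m has ndrk(n) = α. -/
theorem stmt_15 (T : ℕ → Set Seq2) (ι : ℕ) (hι : 2 ≤ ι)
    (hT : ∀ n, IsTreeNoMax (T n)) (m : MTK T ι) (α β : Ordinal)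
    (hge : MTK.NdrkGe m β) (hlt : ¬ MTK.NdrkGe m (β + 1)) (hαβ : α < β) :
    ∃ n : MTK T ι, m.Ext n ∧ MTK.NdrkGe n α ∧ ¬ MTK.NdrkGe n (α + 1) :=
  MTK.stmt_15' T ι m α β hge hlt hαβ
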